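/- More generally, for any integer m ≥ d ≥ 2 and nonnegative reals p_1,…,p_m summing to 1, Σ_{i=1}^m p_i(1−p_i)^{d−1} ≤ m·(1/m)·(1−1/m)^{d−1} = ((m−1)/m)^{d−1} provided m ≥ d, i.e., the function is maximized by the uniform distribution when m ≥ d. -/

import Mathlib

open Finset

lemma tangent_aux (j : ℕ) (b y : ℝ) (hb0 : 0 ≤ b) (hy0 : 0 ≤ y) (hy1 : y ≤ 1)
    (hbk : (j : ℝ) + 1 ≤ ((j : ℝ) + 2) * b) :
    (1 - y) * y ^ (j + 1) ≤
      (1 - b) * b ^ (j + 1) + (((j : ℝ) + 1) * b ^ j - ((j : ℝ) + 2) * b ^ (j + 1)) * (y - b) := by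
  induction j with
  | zero =>
    push_cast
    nlinarith [sq_nonneg (y - b)]
  | succ n ih =>
    have hbk' : (n : ℝ) + 1 ≤ ((n : ℝ) + 2) * b := by
      push_cast at hbk
      nlinarith [hbk, Nat.cast_nonneg (α := ℝ) n]
    have IH := ih hbk'
    have hbj : (0 : ℝ) ≤ b ^ n := pow_nonneg hb0 n
    have h1 : 0 ≤ y * ((1 - b) * b ^ (n + 1) +
        (((n : ℝ) + 1) * b ^ n - ((n : ℝ) + 2) * b ^ (n + 1)) * (y - b) - (1 - y) * y ^ (n + 1)) :=
      mul_nonneg hy0 (by linarith)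
    have h2 : 0 ≤ (y - b) ^ 2 * b ^ n * (((n : ℝ) + 2) * b - ((n : ℝ) + 1)) := by
      push_cast at hbk
      apply mul_nonneg (mul_nonneg (sq_nonneg _) hbj)
      linarith
    have hid : (1 - b) * b ^ (n + 2) +
        (((n : ℝ) + 2) * b ^ (n + 1) - ((n : ℝ) + 3) * b ^ (n + 2)) * (y - b) -
        (1 - y) * y ^ (n + 2) =
        y * ((1 - b) * b ^ (n + 1) +
          (((n : ℝ) + 1) * b ^ n - ((n : ℝ) + 2) * b ^ (n + 1)) * (y - b) - (1 - y) * y ^ (n + 1)) +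
        (y - b) ^ 2 * b ^ n * (((n : ℝ) + 2) * b - ((n : ℝ) + 1)) := by ring
    push_cast
    show (1 - y) * y ^ (n + 2) ≤
      (1 - b) * b ^ (n + 2) + (((n:ℝ) + 1 + 1) * b ^ (n + 1) - ((n:ℝ) + 1 + 2) * b ^ (n + 2)) * (y - b)
    nlinarith [h1, h2, hid]

theorem stmt6 (d m : ℕ) (hd : 2 ≤ d) (hm : d ≤ m) (p : Fin m → ℝ)
    (hpos : ∀ i, 0 ≤ p i) (hsum : ∑ i, p i = 1) :
    ∑ i, p i * (1 - p i) ^ (d - 1) ≤ (((m : ℝ) - 1) / (m : ℝ)) ^ (d - 1) := by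
  obtain ⟨j, rfl⟩ : ∃ j, d = j + 2 := ⟨d - 2, by omega⟩
  have hd1 : (j + 2) - 1 = j + 1 := by omega
  rw [hd1]
  have hm2 : 2 ≤ m := le_trans hd hm
  have hmpos : (0 : ℝ) < m := by positivity
  set b : ℝ := ((m : ℝ) - 1) / m with hbdef
  have hb0 : 0 ≤ b := by
    apply div_nonneg _ (le_of_lt hmpos)
    have : (2 : ℝ) ≤ m := by exact_mod_cast hm2
    linarith
  have hmb : (m : ℝ) * b = (m : ℝ) - 1 := by
    rw [hbdef, mul_div_assoc', mul_comm, mul_div_assoc, div_self hmpos.ne', mul_one]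
  have h1b : (m : ℝ) * (1 - b) = 1 := by
    rw [mul_sub, hmb]; ring
  have hbk : (j : ℝ) + 1 ≤ ((j : ℝ) + 2) * b := by
    have hmc : ((j : ℝ) + 2) ≤ (m : ℝ) := by exact_mod_cast hm
    rw [hbdef, ← mul_div_assoc, le_div_iff₀ hmpos]
    nlinarith [hmc]
  have hple : ∀ i, p i ≤ 1 := by
    intro i
    rw [← hsum]
    exact Finset.single_le_sum (fun j _ => hpos j) (Finset.mem_univ i)
  have key : ∀ i : Fin m, p i * (1 - p i) ^ (j + 1) ≤
      (1 - b) * b ^ (j + 1) +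
        (((j : ℝ) + 1) * b ^ j - ((j : ℝ) + 2) * b ^ (j + 1)) * ((1 - p i) - b) := by
    intro i
    have := tangent_aux j b (1 - p i) hb0 (by linarith [hple i]) (by linarith [hpos i]) hbk
    simpa using this
  calc ∑ i, p i * (1 - p i) ^ (j + 1)
      ≤ ∑ i : Fin m, ((1 - b) * b ^ (j + 1) +
          (((j : ℝ) + 1) * b ^ j - ((j : ℝ) + 2) * b ^ (j + 1)) * ((1 - p i) - b)) :=
        Finset.sum_le_sum fun i _ => key i
    _ = b ^ (j + 1) := by
        rw [Finset.sum_add_distrib, Finset.sum_const, ← Finset.mul_sum]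
        have hs : ∑ i : Fin m, ((1 - p i) - b) = 0 := by
          simp only [Finset.sum_sub_distrib, hsum]
          simp [Finset.card_univ, mul_sub]
          nlinarith [h1b, hmb]
        rw [hs, mul_zero, add_zero]
        simp only [Finset.card_univ, Fintype.card_fin, nsmul_eq_mul]
        rw [← mul_assoc, h1b, one_mul]
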